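/- Each minimizing-movement step satisfies the minimality comparison against the previous set: if E_{k+1} minimizes P(E) + (1/h)∫_E d̄_{E_k} dx under |E| = |E_k|, then P(E_{k+1}) + (1/h)∫_{E_{k+1} Δ E_k}|d̄_{E_k}| dx ≤ P(E_k). In particular P(E_{k+1}) ≤ P(E_k), so the perimeter is nonincreasing along the discrete flow and P(E_k) ≤ P(E₀) for all k. -/
import Mathlib


open MeasureTheory Metric Set
open scoped symmDiff RealInnerProductSpace ENNReal

/-- Euclidean space `ℝ^{n+1}`. -/
abbrev Euc (n : ℕ) := EuclideanSpace ℝ (Fin (n + 1))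

-- The signed distance function of a set: negative inside, positive outside.
open scoped Classical in
noncomputable def sdist {n : ℕ} (E : Set (Euc n)) (x : Euc n) : ℝ :=
  if x ∈ E then -Metric.infDist x (frontier E) else Metric.infDist x (frontier E)

/-- Divergence of a vector field on `ℝ^{n+1}`. -/
noncomputable def vdiv {n : ℕ} (X : Euc n → Euc n) (x : Euc n) : ℝ :=
  ∑ i, fderiv ℝ X x (EuclideanSpace.single i 1) i

/-- The admissible values in the variational definition of the relative perimeter
of `E` in `U`. -/
def perimSet {n : ℕ} (E U : Set (Euc n)) : Set ℝ :=
  {a | ∃ X : Euc n → Euc n, ContDiff ℝ 1 X ∧ HasCompactSupport X ∧ tsupport X ⊆ U ∧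
    (∀ x, ‖X x‖ ≤ 1) ∧ a = ∫ x in E, vdiv X x}

/-- The relative perimeter `P(E, U)`. -/
noncomputable def perimeterIn {n : ℕ} (E U : Set (Euc n)) : ℝ := sSup (perimSet E U)

/-- The perimeter `P(E) = P(E, ℝ^{n+1})`. -/
noncomputable def perimeter {n : ℕ} (E : Set (Euc n)) : ℝ := perimeterIn E Set.univ

/-- A measurable set has finite perimeter if the variational perimeter is finite. -/
def HasFinitePerimeter {n : ℕ} (E : Set (Euc n)) : Prop :=
  MeasurableSet E ∧ BddAbove (perimSet E Set.univ)

/-- The Almgren–Taylor–Wang type functional `𝓕_h(E, F) = P(E) + (1/h) ∫_E d̄_F`. -/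
noncomputable def Fh {n : ℕ} (h : ℝ) (F E : Set (Euc n)) : ℝ :=
  perimeter E + (1 / h) * ∫ x in E, sdist F x

/-- `E` is a minimizer of `𝓕_h(·, F)` under the volume constraint `|E| = |F|`. -/
def IsFhMinimizer {n : ℕ} (h : ℝ) (F E : Set (Euc n)) : Prop :=
  HasFinitePerimeter E ∧ volume E = volume F ∧
  ∀ G : Set (Euc n), HasFinitePerimeter G → volume G = volume F → Fh h F E ≤ Fh h F G

/-- `H` is the distributional mean curvature of a set whose reduced boundary is `RB`,
with generalized outer unit normal `ν`: for every compactly supported `C¹` vector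
field `X`, the integral over `RB` of the tangential divergence of `X` equals the
integral of `H ⟪X, ν⟫` (integrals with respect to `n`-dimensional Hausdorff measure). -/
def IsDistribMeanCurvature {n : ℕ} (RB : Set (Euc n)) (ν : Euc n → Euc n)
    (H : Euc n → ℝ) : Prop :=
  ∀ X : Euc n → Euc n, ContDiff ℝ 1 X → HasCompactSupport X →
    ∫ x in RB, (vdiv X x - ⟪fderiv ℝ X x (ν x), ν x⟫) ∂(μH[(n : ℝ)]) =
      ∫ x in RB, H x * ⟪X x, ν x⟫ ∂(μH[(n : ℝ)])

/-- `RB` represents the reduced boundary of `E` and `ν` its unit normal, in the sense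
that the relative perimeter of `E` in every open set is the `n`-dimensional Hausdorff
measure of `RB` therein. -/
def IsReducedBoundary {n : ℕ} (E RB : Set (Euc n)) (ν : Euc n → Euc n) : Prop :=
  RB ⊆ frontier E ∧ (∀ x ∈ RB, ‖ν x‖ = 1) ∧
  ∀ U : Set (Euc n), IsOpen U → perimeterIn E U = (μH[(n : ℝ)] (RB ∩ U)).toReal

/-- each minimizing-movement step satisfies
`P(E_{k+1}) + (1/h)∫_{E_{k+1} Δ E_k}|d̄_{E_k}| ≤ P(E_k)`; in particular the perimeter
is nonincreasing along the discrete flow and `P(E_k) ≤ P(E₀)`. -/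
theorem discrete_dissipation_inequality {n : ℕ} (h : ℝ) (hh0 : 0 < h) (hh1 : h < 1)
    (E : ℕ → Set (Euc n)) (hE0open : IsOpen (E 0))
    (hE0bdd : Bornology.IsBounded (E 0)) (hE0fp : HasFinitePerimeter (E 0))
    (hmin : ∀ k : ℕ, IsFhMinimizer h (E k) (E (k + 1))) :
    (∀ k : ℕ, perimeter (E (k + 1)) +
        (1 / h) * ∫ x in (E (k + 1)) ∆ (E k), |sdist (E k) x| ≤ perimeter (E k)) ∧
    (∀ k : ℕ, perimeter (E (k + 1)) ≤ perimeter (E k)) ∧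
    (∀ k : ℕ, perimeter (E k) ≤ perimeter (E 0)) := by
  classical
  -- All sets in the flow have finite perimeter
  have hFP : ∀ k, HasFinitePerimeter (E k) := by
    intro k
    induction k with
    | zero => exact hE0fp
    | succ k ih => exact (hmin k).1
  have hvol : ∀ k, volume (E k) = volume (E 0) := by
    intro k
    induction k with
    | zero => rfl
    | succ k ih => rw [(hmin k).2.1, ih]
  have hvolfin : ∀ k, volume (E k) < ⊤ := by
    intro k
    rw [hvol k]
    exact hE0bdd.measure_lt_top
  have key : ∀ k : ℕ, perimeter (E (k + 1)) +
      (1 / h) * ∫ x in (E (k + 1)) ∆ (E k), |sdist (E k) x| ≤ perimeter (E k) := by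
    intro k
    set F := E k with hF
    set E' := E (k + 1) with hE'
    set f := sdist F with hfdef
    have hFmeas : MeasurableSet F := (hFP k).1
    have hE'meas : MeasurableSet E' := (hFP (k + 1)).1
    have hfmeas : Measurable f := by
      have : f = fun x => if x ∈ F then -Metric.infDist x (frontier F)
          else Metric.infDist x (frontier F) := by
        funext x; simp [hfdef, sdist]
      rw [this]
      exact Measurable.ite hFmeas
        (Metric.continuous_infDist_pt (frontier F)).measurable.neg
        (Metric.continuous_infDist_pt (frontier F)).measurable
    have hfmem : ∀ x ∈ F, f x = -Metric.infDist x (frontier F) := by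
      intro x hx; simp [hfdef, sdist, hx]
    have hfnmem : ∀ x, x ∉ F → f x = Metric.infDist x (frontier F) := by
      intro x hx; simp [hfdef, sdist, hx]
    have hfnonpos : ∀ x ∈ F, f x ≤ 0 := by
      intro x hx
      rw [hfmem x hx]
      simp [Metric.infDist_nonneg]
    have hfnonneg : ∀ x, x ∉ F → 0 ≤ f x := by
      intro x hx
      rw [hfnmem x hx]
      exact Metric.infDist_nonneg
    -- choose a radius whose ball has volume bigger than F
    obtain ⟨m, hm⟩ : ∃ m : ℕ, volume F < volume (Metric.ball (0 : Euc n) m) := by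
      have hmono : Monotone fun m : ℕ => Metric.ball (0 : Euc n) m := by
        intro a b hab
        exact Metric.ball_subset_ball (by exact_mod_cast hab)
      have hU : volume (⋃ m : ℕ, Metric.ball (0 : Euc n) m)
          = ⨆ m : ℕ, volume (Metric.ball (0 : Euc n) m) :=
        hmono.directed_le.measure_iUnion
      rw [Metric.iUnion_ball_nat] at hU
      have htop : volume (univ : Set (Euc n)) = ⊤ :=
        MeasureTheory.measure_univ_of_isAddLeftInvariant volume
      have : volume F < ⨆ m : ℕ, volume (Metric.ball (0 : Euc n) m) := by
        rw [← hU, htop]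
        exact hvolfin k
      exact lt_iSup_iff.mp this
    set M : ℝ := (m : ℝ) + 1 with hMdef
    have hM0 : (0 : ℝ) < M := by positivity
    have hmM : volume F < volume (Metric.ball (0 : Euc n) M) :=
      lt_of_lt_of_le hm (measure_mono (Metric.ball_subset_ball (by simp [hMdef])))
    have hbound : ∀ x ∈ F, Metric.infDist x (frontier F) ≤ M := by
      intro x hx
      by_contra hgt
      push_neg at hgt
      have hxnf : x ∉ frontier F := by
        intro hxf
        rw [Metric.infDist_zero_of_mem hxf] at hgt
        linarith
      have hxint : x ∈ interior F := by
        have hxc : x ∈ closure F := subset_closure hx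
        by_contra hxi
        exact hxnf ⟨hxc, hxi⟩
      have hdisj : ∀ y ∈ Metric.ball x M, y ∉ frontier F := by
        intro y hy hyf
        have h1 : Metric.infDist x (frontier F) ≤ dist x y :=
          Metric.infDist_le_dist_of_mem hyf
        rw [Metric.mem_ball, dist_comm] at hy
        linarith
      have hball : Metric.ball x M ⊆ interior F := by
        refine (convex_ball x M).isPreconnected.subset_left_of_subset_union
          isOpen_interior (isClosed_closure (s := F)).isOpen_compl ?_ ?_
          ⟨x, Metric.mem_ball_self hM0, hxint⟩
        · exact disjoint_compl_right.mono_left interior_subset_closure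
        · intro y hy
          by_cases hyc : y ∈ closure F
          · exact Or.inl (by_contra fun hyi => (hdisj y hy) ⟨hyc, hyi⟩)
          · exact Or.inr hyc
      have hle : volume (Metric.ball x M) ≤ volume F :=
        measure_mono (hball.trans interior_subset)
      rw [MeasureTheory.Measure.addHaar_ball_center] at hle
      exact absurd (lt_of_lt_of_le hmM hle) (lt_irrefl _)
    have hintF : IntegrableOn f F := by
      apply MeasureTheory.Measure.integrableOn_of_bounded (M := M) (hvolfin k).ne
        hfmeas.aestronglyMeasurable
      filter_upwards [ae_restrict_mem hFmeas] with x hx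
      rw [Real.norm_eq_abs, hfmem x hx, abs_neg, abs_of_nonneg Metric.infDist_nonneg]
      exact hbound x hx
    have hcmp := (hmin k).2.2 F (hFP k) rfl
    rw [Fh, Fh] at hcmp
    have h1h : (0 : ℝ) < 1 / h := by positivity
    by_cases hintE : IntegrableOn f E'
    · -- integrable case: exact splitting identity
      have hint1 : IntegrableOn f (E' ∩ F) := hintF.mono_set inter_subset_right
      have hint2 : IntegrableOn f (E' \ F) := hintE.mono_set diff_subset
      have hint3 : IntegrableOn f (F \ E') := hintF.mono_set diff_subset
      have hsplitE : ∫ x in E', f x = (∫ x in E' ∩ F, f x) + ∫ x in E' \ F, f x := by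
        have := MeasureTheory.setIntegral_union (f := f) (μ := volume)
          (disjoint_sdiff_self_right.mono_left inter_subset_right)
          (hE'meas.diff hFmeas) hint1 hint2
        rwa [Set.inter_union_diff] at this
      have hsplitF : ∫ x in F, f x = (∫ x in F ∩ E', f x) + ∫ x in F \ E', f x := by
        have := MeasureTheory.setIntegral_union (f := f) (μ := volume)
          (disjoint_sdiff_self_right.mono_left inter_subset_right)
          (hFmeas.diff hE'meas) (hintF.mono_set inter_subset_left) hint3
        rwa [Set.inter_union_diff] at this
      have hsd : ∫ x in E' ∆ F, |f x| = (∫ x in E' \ F, |f x|) + ∫ x in F \ E', |f x| := by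
        rw [Set.symmDiff_def]
        exact MeasureTheory.setIntegral_union (f := fun x => |f x|) (μ := volume)
          disjoint_sdiff_sdiff (hFmeas.diff hE'meas) hint2.abs hint3.abs
      have h1 : ∫ x in E' \ F, |f x| = ∫ x in E' \ F, f x :=
        MeasureTheory.setIntegral_congr_fun (hE'meas.diff hFmeas)
          (fun x hx => abs_of_nonneg (hfnonneg x hx.2))
      have h2 : ∫ x in F \ E', |f x| = -∫ x in F \ E', f x := by
        rw [← MeasureTheory.integral_neg]
        exact MeasureTheory.setIntegral_congr_fun (hFmeas.diff hE'meas)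
          (fun x hx => abs_of_nonpos (hfnonpos x hx.1))
      have hkey : ∫ x in E' ∆ F, |f x| = (∫ x in E', f x) - ∫ x in F, f x := by
        rw [hsd, h1, h2, hsplitE, hsplitF, Set.inter_comm F E']
        ring
      rw [hkey, mul_sub]
      linarith
    · -- non-integrable case: both junk integrals vanish
      have hint1 : IntegrableOn f (E' ∩ F) := hintF.mono_set inter_subset_right
      have hnint2 : ¬ IntegrableOn f (E' \ F) := by
        intro hc
        apply hintE
        have := hint1.union hc
        rwa [Set.inter_union_diff] at this
      have hnintsd : ¬ IntegrableOn (fun x => |f x|) (E' ∆ F) := by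
        intro hc
        apply hnint2
        have habs : IntegrableOn (fun x => |f x|) (E' \ F) :=
          hc.mono_set (by rw [Set.symmDiff_def]; exact subset_union_left)
        exact habs.mono' hfmeas.aestronglyMeasurable
          (Filter.Eventually.of_forall fun x => le_of_eq (Real.norm_eq_abs _))
      have hE'0 : ∫ x in E', f x = 0 := MeasureTheory.integral_undef hintE
      have hsd0 : ∫ x in E' ∆ F, |f x| = 0 := MeasureTheory.integral_undef hnintsd
      have hF0 : ∫ x in F, f x ≤ 0 := by
        apply MeasureTheory.integral_nonpos_of_ae
        filter_upwards [ae_restrict_mem hFmeas] with x hx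
        exact hfnonpos x hx
      have hFh : (1 / h) * ∫ x in F, f x ≤ 0 :=
        mul_nonpos_of_nonneg_of_nonpos h1h.le hF0
      rw [hsd0]
      rw [hE'0] at hcmp
      linarith
  have hmono : ∀ k : ℕ, perimeter (E (k + 1)) ≤ perimeter (E k) := by
    intro k
    have h1 : 0 ≤ (1 / h) * ∫ x in (E (k + 1)) ∆ (E k), |sdist (E k) x| :=
      mul_nonneg (by positivity) (MeasureTheory.integral_nonneg fun x => abs_nonneg _)
    linarith [key k]
  refine ⟨key, hmono, ?_⟩
  intro k
  induction k with
  | zero => exact le_refl _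
  | succ k ih => exact le_trans (hmono k) ih
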